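/- Let G = ∏_p GL(n, ℤ_p), the product over all primes p of the groups GL(n, ℤ_p), equipped with the product topology. Let u = (u_p)_p ∈ G be such that for every prime p, the image of u_p under the reduction map GL(n, ℤ_p) → GL(n, F_p) has order a power of p. Then for every prime ℓ, the element v ∈ G whose ℓ-th component equals u_ℓ and whose p-th component is the identity matrix for every prime p ≠ ℓ belongs to the closure of the cyclic subgroup {u^k : k ∈ ℤ} in G. -/

import Mathlib

open scoped MatrixGroups

instance (p : Nat.Primes) : Fact (p : ℕ).Prime := ⟨p.2⟩

/-- The full product `G = ∏_p GL(n, ℤ_p)` over all primes, with the product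
topology. -/
abbrev AdelicGL (n : ℕ) : Type := (p : Nat.Primes) → GL (Fin n) ℤ_[(p : ℕ)]

/-- Reduction `GL(n, ℤ_p) → GL(n, F_p)`, induced by entrywise reduction
`ℤ_p → F_p`. -/
noncomputable def redGL (n : ℕ) (p : Nat.Primes) :
    GL (Fin n) ℤ_[(p : ℕ)] →* GL (Fin n) (ZMod (p : ℕ)) :=
  Units.map (PadicInt.toZMod.mapMatrix.toMonoidHom)

section Aux

variable {n p : ℕ} [hp : Fact p.Prime]

/-- The `m`-th congruence subgroup of `GL(n, ℤ_p)`. -/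
def congK (n p : ℕ) [Fact p.Prime] (m : ℕ) : Subgroup (GL (Fin n) ℤ_[p]) where
  carrier := {g | ∀ i j, (p : ℤ_[p]) ^ m ∣ ((g : Matrix (Fin n) (Fin n) ℤ_[p]) - 1) i j}
  one_mem' := by intro i j; simp
  mul_mem' := by
    intro a b ha hb i j
    have h : ((a * b : GL (Fin n) ℤ_[p]) : Matrix (Fin n) (Fin n) ℤ_[p]) - 1
        = (a : Matrix (Fin n) (Fin n) ℤ_[p]) * ((b : Matrix (Fin n) (Fin n) ℤ_[p]) - 1)
          + ((a : Matrix (Fin n) (Fin n) ℤ_[p]) - 1) := by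
      rw [Units.val_mul, mul_sub, mul_one]; abel
    rw [h, Matrix.add_apply, Matrix.mul_apply]
    exact dvd_add (Finset.dvd_sum fun c _ => Dvd.dvd.mul_left (hb c j) _) (ha i j)
  inv_mem' := by
    intro a ha i j
    have h : ((a⁻¹ : GL (Fin n) ℤ_[p]) : Matrix (Fin n) (Fin n) ℤ_[p]) - 1
        = ((a⁻¹ : GL (Fin n) ℤ_[p]) : Matrix (Fin n) (Fin n) ℤ_[p])
          * (1 - (a : Matrix (Fin n) (Fin n) ℤ_[p])) := by
      rw [mul_sub, mul_one, ← Units.val_mul, inv_mul_cancel, Units.val_one]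
    rw [h, Matrix.mul_apply]
    refine Finset.dvd_sum fun c _ => Dvd.dvd.mul_left ?_ _
    have h1 : (1 - (a : Matrix (Fin n) (Fin n) ℤ_[p]))
        = -((a : Matrix (Fin n) (Fin n) ℤ_[p]) - 1) := by abel
    rw [h1, Matrix.neg_apply]
    exact dvd_neg.mpr (ha c j)

lemma congK_mono {m m' : ℕ} (h : m ≤ m') : congK n p m' ≤ congK n p m :=
  fun g hg i j => dvd_trans (pow_dvd_pow _ h) (hg i j)

lemma entry_dvd_mul {a b : ℕ} {M N : Matrix (Fin n) (Fin n) ℤ_[p]}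
    (hM : ∀ i j, (p : ℤ_[p]) ^ a ∣ M i j) (hN : ∀ i j, (p : ℤ_[p]) ^ b ∣ N i j) :
    ∀ i j, (p : ℤ_[p]) ^ (a + b) ∣ (M * N) i j := by
  intro i j
  rw [Matrix.mul_apply, pow_add]
  exact Finset.dvd_sum fun c _ => mul_dvd_mul (hM i c) (hN c j)

lemma entry_dvd_pow {a : ℕ} {M : Matrix (Fin n) (Fin n) ℤ_[p]}
    (hM : ∀ i j, (p : ℤ_[p]) ^ a ∣ M i j) :
    ∀ k, 1 ≤ k → ∀ i j, (p : ℤ_[p]) ^ (k * a) ∣ (M ^ k) i j := by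
  intro k
  induction k with
  | zero => intro h; omega
  | succ k ih =>
    intro _ i j
    rcases Nat.eq_zero_or_pos k with rfl | hk
    · simpa using hM i j
    · have := entry_dvd_mul (ih hk) hM i j
      rw [← pow_succ] at this
      simpa [Nat.succ_mul] using this

lemma congK_pow_p_mem {m : ℕ} (hm : 1 ≤ m) {g : GL (Fin n) ℤ_[p]}
    (hg : g ∈ congK n p m) : g ^ p ∈ congK n p (m + 1) := by
  intro i j
  set A : Matrix (Fin n) (Fin n) ℤ_[p] := (g : Matrix (Fin n) (Fin n) ℤ_[p]) - 1 with hA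
  have hval : ((g ^ p : GL (Fin n) ℤ_[p]) : Matrix (Fin n) (Fin n) ℤ_[p]) = (1 + A) ^ p := by
    rw [Units.val_pow_eq_pow_val]
    congr 1
    rw [hA]; abel
  have hexp := (Commute.one_left A).add_pow p
  have h2 : ((g ^ p : GL (Fin n) ℤ_[p]) : Matrix (Fin n) (Fin n) ℤ_[p]) - 1
      = ∑ c ∈ Finset.range p, A ^ (p - c) * (p.choose c : Matrix (Fin n) (Fin n) ℤ_[p]) := by
    rw [hval, hexp, Finset.sum_range_succ]
    simp
  rw [h2, Matrix.sum_apply]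
  refine Finset.dvd_sum fun c hc => ?_
  have hcp : c < p := Finset.mem_range.mp hc
  have hterm : A ^ (p - c) * ((p.choose c : ℕ) : Matrix (Fin n) (Fin n) ℤ_[p])
      = (p.choose c : ℕ) • A ^ (p - c) := by
    rw [← (Nat.cast_commute (p.choose c) (A ^ (p - c))).eq, ← nsmul_eq_mul]
  rw [hterm, Matrix.smul_apply, nsmul_eq_mul]
  rcases Nat.eq_zero_or_pos c with rfl | hc1
  · simp only [Nat.choose_zero_right, Nat.cast_one, one_mul, Nat.sub_zero]
    have hdvd := entry_dvd_pow hg p (by have := hp.out.two_le; omega) i j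
    have hle : m + 1 ≤ p * m := by have := hp.out.two_le; nlinarith
    exact dvd_trans (pow_dvd_pow _ hle) hdvd
  · have hdC : (p : ℤ_[p]) ∣ ((p.choose c : ℕ) : ℤ_[p]) := by
      exact_mod_cast Nat.cast_dvd_cast (hp.out.dvd_choose_self (by omega) hcp)
    have hdA : (p : ℤ_[p]) ^ m ∣ (A ^ (p - c)) i j := by
      have h1 : 1 ≤ p - c := by have := hp.out.two_le; omega
      have := entry_dvd_pow hg (p - c) h1 i j
      exact dvd_trans (pow_dvd_pow _ (Nat.le_mul_of_pos_left m (by omega))) this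
    rw [pow_succ, mul_comm ((p : ℤ_[p]) ^ m) _]
    exact mul_dvd_mul hdC hdA

lemma mat_mem_of_nhds {A₀ : Matrix (Fin n) (Fin n) ℤ_[p]}
    {V : Set (Matrix (Fin n) (Fin n) ℤ_[p])} (hV : V ∈ nhds A₀) :
    ∃ m : ℕ, ∀ A : Matrix (Fin n) (Fin n) ℤ_[p],
      (∀ i j, (p : ℤ_[p]) ^ m ∣ (A - A₀) i j) → A ∈ V := by
  have hV' : V ∈ @nhds (Fin n → Fin n → ℤ_[p]) _ A₀ := hV
  replace hV' := (Metric.mem_nhds_iff (α := Fin n → Fin n → ℤ_[p])).mp hV'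
  obtain ⟨ε, hε, hball⟩ := hV'
  have hp1 : (1 : ℝ) < (p : ℝ) := by exact_mod_cast hp.out.one_lt
  obtain ⟨m, hm⟩ : ∃ m : ℕ, ((p : ℝ)⁻¹) ^ m < ε :=
    exists_pow_lt_of_lt_one hε (by rw [inv_lt_one_iff₀]; right; exact hp1)
  refine ⟨m, fun A hA => hball ?_⟩
  have hdist : dist (show Fin n → Fin n → ℤ_[p] from A) A₀ ≤ ((p : ℝ)⁻¹) ^ m := by
    refine (dist_pi_le_iff (by positivity)).mpr fun i => ?_
    refine (dist_pi_le_iff (by positivity)).mpr fun j => ?_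
    rw [dist_eq_norm]
    have h1 : ‖(A - A₀) i j‖ ≤ (p : ℝ) ^ (-(m : ℤ)) :=
      (PadicInt.norm_le_pow_iff_mem_span_pow _ m).mpr
        (Ideal.mem_span_singleton.mpr (hA i j))
    rw [zpow_neg, zpow_natCast, ← inv_pow] at h1
    rw [Matrix.sub_apply] at h1
    exact h1
  exact Metric.mem_ball.mpr (lt_of_le_of_lt hdist hm)

lemma congK_subset_nhds {W : Set (GL (Fin n) ℤ_[p])} (hW : W ∈ nhds 1) :
    ∃ m : ℕ, 1 ≤ m ∧ ∀ g : GL (Fin n) ℤ_[p], g ∈ congK n p m → g ∈ W := by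
  rw [Units.isInducing_embedProduct.nhds_eq_comap, Filter.mem_comap] at hW
  obtain ⟨V, hV, hVW⟩ := hW
  rw [Units.embedProduct_apply, Units.val_one, inv_one, Units.val_one,
    mem_nhds_prod_iff] at hV
  obtain ⟨V1, hV1, V2, hV2, hsub⟩ := hV
  have hV2' : (MulOpposite.op : Matrix (Fin n) (Fin n) ℤ_[p] → _) ⁻¹' V2 ∈
      nhds (1 : Matrix (Fin n) (Fin n) ℤ_[p]) :=
    MulOpposite.continuous_op.continuousAt.preimage_mem_nhds hV2
  obtain ⟨m1, hm1⟩ := mat_mem_of_nhds hV1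
  obtain ⟨m2, hm2⟩ := mat_mem_of_nhds hV2'
  refine ⟨max (max m1 m2) 1, le_max_right _ _, fun g hg => hVW ?_⟩
  have hg1 : g ∈ congK n p m1 := congK_mono ((le_max_left m1 m2).trans (le_max_left _ _)) hg
  have hg2 : g⁻¹ ∈ congK n p m2 :=
    congK_mono ((le_max_right m1 m2).trans (le_max_left _ _)) ((congK n p _).inv_mem hg)
  refine Set.mem_preimage.mpr (hsub ?_)
  rw [Units.embedProduct_apply]
  exact ⟨hm1 _ hg1, hm2 _ hg2⟩

lemma congK_pow_p_pow_mem {g : GL (Fin n) ℤ_[p]} (hg : g ∈ congK n p 1) (t : ℕ) :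
    g ^ (p ^ t) ∈ congK n p (t + 1) := by
  induction t with
  | zero => simpa using hg
  | succ t ih =>
    have : g ^ (p ^ (t + 1)) = (g ^ (p ^ t)) ^ p := by rw [← pow_mul, pow_succ]
    rw [this]
    exact congK_pow_p_mem (by omega) ih

end Aux

lemma mem_congK_one_of_red {n : ℕ} {p : Nat.Primes} {g : GL (Fin n) ℤ_[(p : ℕ)]}
    (h : redGL n p g = 1) : g ∈ congK n (p : ℕ) 1 := by
  intro i j
  have hval : PadicInt.toZMod.mapMatrix (g : Matrix (Fin n) (Fin n) ℤ_[(p : ℕ)]) = 1 :=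
    congrArg Units.val h
  have hentry : PadicInt.toZMod (((g : Matrix (Fin n) (Fin n) ℤ_[(p : ℕ)]) - 1) i j) = 0 := by
    have := congrFun (congrFun (congrArg (fun M => (M : Matrix (Fin n) (Fin n) (ZMod (p : ℕ)))) hval) i) j
    simp only [RingHom.mapMatrix_apply, Matrix.map_apply] at this
    rw [Matrix.sub_apply, map_sub, this]
    rcases eq_or_ne i j with rfl | hij
    · simp
    · simp [Matrix.one_apply_ne hij]
  have : ((g : Matrix (Fin n) (Fin n) ℤ_[(p : ℕ)]) - 1) i j ∈
      IsLocalRing.maximalIdeal ℤ_[(p : ℕ)] := by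
    rw [← PadicInt.ker_toZMod]
    exact hentry
  rw [PadicInt.maximalIdeal_eq_span_p, Ideal.mem_span_singleton] at this
  simpa using this

lemma key_lemma (n : ℕ) (p : Nat.Primes) (g : GL (Fin n) ℤ_[(p : ℕ)])
    (hg : ∃ k : ℕ, orderOf (redGL n p g) = (p : ℕ) ^ k)
    {W : Set (GL (Fin n) ℤ_[(p : ℕ)])} (hW : W ∈ nhds 1) :
    ∃ t : ℕ, ∀ s : ℤ, g ^ ((((p : ℕ) : ℤ)) ^ t * s) ∈ W := by
  obtain ⟨k0, hk0⟩ := hg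
  obtain ⟨m, hm1, hmW⟩ := congK_subset_nhds hW
  have h1 : g ^ ((p : ℕ) ^ k0) ∈ congK n (p : ℕ) 1 := by
    apply mem_congK_one_of_red
    rw [map_pow, ← hk0, pow_orderOf_eq_one]
  have h2 : g ^ ((p : ℕ) ^ k0 * (p : ℕ) ^ (m - 1)) ∈ congK n (p : ℕ) m := by
    rw [pow_mul]
    have := congK_pow_p_pow_mem h1 (m - 1)
    rwa [Nat.sub_add_cancel hm1] at this
  refine ⟨k0 + (m - 1), fun s => hmW _ ?_⟩
  have heq : g ^ ((((p : ℕ) : ℤ)) ^ (k0 + (m - 1)) * s)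
      = (g ^ ((p : ℕ) ^ k0 * (p : ℕ) ^ (m - 1))) ^ s := by
    rw [← zpow_natCast g, ← zpow_mul]
    congr 1
    push_cast [pow_add]
    ring
  rw [heq]
  exact Subgroup.zpow_mem _ h2 s

/-- Let `u = (u_p)_p ∈ G = ∏_p GL(n, ℤ_p)` be such that for
every prime `p` the image of `u_p` in `GL(n, F_p)` has order a power of `p`.
Then for every prime `ℓ`, the element of `G` with `ℓ`-component `u_ℓ` and all
other components the identity belongs to the closure of the cyclic subgroup
`{u^k : k ∈ ℤ}` in `G`. -/
theorem stmt_14 (n : ℕ) (u : AdelicGL n)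
    (hu : ∀ p : Nat.Primes, ∃ k : ℕ, orderOf (redGL n p (u p)) = (p : ℕ) ^ k) :
    ∀ ℓ : Nat.Primes,
      Function.update (1 : AdelicGL n) ℓ (u ℓ) ∈
        closure ((Subgroup.zpowers u : Subgroup (AdelicGL n)) : Set (AdelicGL n)) := by
  classical
  intro ℓ
  rw [mem_closure_iff_nhds]
  intro U hU
  rw [nhds_pi, Filter.mem_pi] at hU
  obtain ⟨I, hIfin, t', ht', hsub⟩ := hU
  set v : AdelicGL n := Function.update (1 : AdelicGL n) ℓ (u ℓ) with hv
  set F : Finset Nat.Primes := insert ℓ hIfin.toFinset with hF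
  set W : (p : Nat.Primes) → Set (GL (Fin n) ℤ_[(p : ℕ)]) :=
    fun p => if p ∈ I then t' p else Set.univ with hWdef
  have hW1 : ∀ p, W p ∈ nhds (v p) := by
    intro p
    by_cases h : p ∈ I
    · simpa [hWdef, h] using ht' p
    · simp [hWdef, h]
  -- the ℓ component
  have hWℓ : W ℓ ∈ nhds (u ℓ) := by
    have := hW1 ℓ
    rwa [hv, Function.update_self] at this
  have hW' : (fun h : GL (Fin n) ℤ_[(ℓ : ℕ)] => u ℓ * h) ⁻¹' (W ℓ) ∈ nhds 1 := by
    refine (continuous_mul_left (u ℓ)).continuousAt.preimage_mem_nhds ?_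
    simpa using hWℓ
  obtain ⟨t2, ht2⟩ := key_lemma n ℓ (u ℓ) (hu ℓ) hW'
  -- the other components
  have h3 : ∀ p : Nat.Primes, ∃ t : ℕ, ∀ s : ℤ, p ∈ F.erase ℓ →
      u p ^ ((((p : ℕ) : ℤ)) ^ t * s) ∈ W p := by
    intro p
    by_cases h : p ∈ F.erase ℓ
    · have hne : p ≠ ℓ := (Finset.mem_erase.mp h).1
      have hWp : W p ∈ nhds 1 := by
        have := hW1 p
        rwa [hv, Function.update_of_ne hne, Pi.one_apply] at this
      obtain ⟨t, ht⟩ := key_lemma n p (u p) (hu p) hWp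
      exact ⟨t, fun s _ => ht s⟩
    · exact ⟨0, fun s h' => absurd h' h⟩
  choose t ht using h3
  set Q : ℕ := ∏ p ∈ F.erase ℓ, (p : ℕ) ^ (t p) with hQ
  have hcop : Nat.Coprime ((ℓ : ℕ) ^ t2) Q := by
    refine Nat.Coprime.prod_right fun p hp => ?_
    have hc : Nat.Coprime (ℓ : ℕ) (p : ℕ) :=
      (Nat.coprime_primes ℓ.2 p.2).mpr fun he => (Finset.mem_erase.mp hp).1 (Subtype.ext he.symm)
    exact Nat.Coprime.pow _ _ hc
  obtain ⟨x, y, hxy⟩ : IsCoprime (((ℓ : ℕ) ^ t2 : ℕ) : ℤ) ((Q : ℕ) : ℤ) :=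
    Nat.isCoprime_iff_coprime.mpr hcop
  set k : ℤ := y * Q with hk
  refine ⟨u ^ k, hsub ?_, ?_⟩
  swap
  · exact Subgroup.zpow_mem _ (Subgroup.mem_zpowers u) k
  intro p hp
  have hpF : p ∈ F := by
    rw [hF]
    exact Finset.mem_insert_of_mem (hIfin.mem_toFinset.mpr hp)
  have hWt : W p = t' p := if_pos hp
  have happ : (u ^ k) p = u p ^ k := rfl
  by_cases hpe : p = ℓ
  · subst hpe
    have hkeq : k = 1 + (((p : ℕ) : ℤ)) ^ t2 * (-x) := by
      have : x * (((p : ℕ) ^ t2 : ℕ) : ℤ) + y * ((Q : ℕ) : ℤ) = 1 := hxy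
      push_cast at this ⊢
      linarith
    rw [happ, hkeq]
    have h2 := ht2 (-x)
    rw [Set.mem_preimage] at h2
    rw [← hWt, zpow_add, zpow_one]
    exact h2
  · have hpF' : p ∈ F.erase ℓ := Finset.mem_erase.mpr ⟨hpe, hpF⟩
    have hdvd : ((((p : ℕ) ^ (t p) : ℕ)) : ℤ) ∣ k := by
      exact Dvd.dvd.mul_left (Int.natCast_dvd_natCast.mpr (Finset.dvd_prod_of_mem _ hpF')) y
    obtain ⟨s, hs⟩ := hdvd
    have hcast : ((((p : ℕ) ^ (t p) : ℕ)) : ℤ) = (((p : ℕ) : ℤ)) ^ (t p) := by push_cast; ring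
    rw [happ, hs, hcast, ← hWt]
    exact ht p s hpF'
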